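/- Let V_1 be a kernel on a compact space E viewed as a bounded operator on C(E), with operator norm ‖V_1‖, and suppose Σ_n ‖V_1^{⊙n}‖ < ∞. If a continuous function F satisfies F = V_0(F) + V_1(F) for another kernel V_0, then F = W_1 ∘ V_0 (F) where W_1 = Σ_{n≥0} V_1^{⊙n}. In particular, if V_0 and V_1 are nonnegative kernels, V_0 is supported on a closed subset E_0, and F restricted to E_0 is nonnegative, then F is nonnegative on all of E. -/
import Mathlib

set_option maxHeartbeats 1000000

/-- Let `V₀, V₁` be kernels on a compact space `E`, viewed as bounded
operators on `C(E)`, with `Σ_n ‖V₁ⁿ‖ < ∞`. If a continuous function `F` satisfies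
`F = V₀ F + V₁ F`, then `F = W₁ (V₀ F)` where `W₁ = Σ_{n ≥ 0} V₁ⁿ`. In particular, if
`V₀` and `V₁` are nonnegative kernels, `V₀` is supported on a closed subset `E₀` (i.e.
`V₀ F` depends only on the restriction of `F` to `E₀`), and `F` is nonnegative on `E₀`,
then `F` is nonnegative on all of `E`. -/
theorem stmt17 {E : Type*} [TopologicalSpace E] [CompactSpace E] [T2Space E]
    (V₀ V₁ : C(E, ℝ) →L[ℝ] C(E, ℝ))
    (hsum : Summable fun n : ℕ => ‖V₁ ^ n‖)
    (F : C(E, ℝ)) (hF : F = V₀ F + V₁ F) :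
    F = (∑' n : ℕ, V₁ ^ n) (V₀ F) ∧
    (∀ E₀ : Set E, IsClosed E₀ →
      (∀ g h : C(E, ℝ), (∀ x ∈ E₀, g x = h x) → V₀ g = V₀ h) →
      (∀ g : C(E, ℝ), (∀ x, 0 ≤ g x) → ∀ x, 0 ≤ V₀ g x) →
      (∀ g : C(E, ℝ), (∀ x, 0 ≤ g x) → ∀ x, 0 ≤ V₁ g x) →
      (∀ x ∈ E₀, 0 ≤ F x) → ∀ x, 0 ≤ F x) := by
  have hOp : Summable fun n : ℕ => V₁ ^ n :=
    @Summable.of_norm ℕ (C(E,ℝ) →L[ℝ] C(E,ℝ))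
      ContinuousLinearMap.toSeminormedAddCommGroup inferInstance (fun n => V₁ ^ n) hsum
  have happ : ∀ g : C(E, ℝ), Summable fun n : ℕ => (V₁ ^ n) g := by
    intro g
    refine Summable.of_norm (Summable.of_nonneg_of_le (fun n => norm_nonneg _)
      (fun n => (V₁ ^ n).le_opNorm g) (hsum.mul_right ‖g‖))
  have htsum_apply : ∀ g : C(E, ℝ), (∑' n : ℕ, V₁ ^ n) g = ∑' n : ℕ, (V₁ ^ n) g := by
    intro g
    exact (ContinuousLinearMap.apply ℝ C(E, ℝ) g).map_tsum hOp
  have key : F = (∑' n : ℕ, V₁ ^ n) (V₀ F) := by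
    have hV0F : V₀ F = F - V₁ F := by rw [hF]; abel_nf; rw [← hF]; abel
    rw [htsum_apply, hV0F]
    have h1 : Summable fun n : ℕ => (V₁ ^ n) F := happ F
    have h2 : Summable fun n : ℕ => (V₁ ^ (n + 1)) F :=
      (summable_nat_add_iff 1).2 h1
    have hsplit : ∀ n : ℕ, (V₁ ^ n) (F - V₁ F) = (V₁ ^ n) F - (V₁ ^ (n + 1)) F := by
      intro n
      rw [map_sub, pow_succ, ContinuousLinearMap.mul_apply]
    calc F = ((V₁ ^ 0) F + ∑' n : ℕ, (V₁ ^ (n + 1)) F) - ∑' n : ℕ, (V₁ ^ (n + 1)) F := by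
            simp
      _ = (∑' n : ℕ, (V₁ ^ n) F) - ∑' n : ℕ, (V₁ ^ (n + 1)) F := by
            rw [Summable.tsum_eq_zero_add h1]
      _ = ∑' n : ℕ, ((V₁ ^ n) F - (V₁ ^ (n + 1)) F) := (Summable.tsum_sub h1 h2).symm
      _ = ∑' n : ℕ, (V₁ ^ n) (F - V₁ F) := by simp_rw [hsplit]
  refine ⟨key, ?_⟩
  intro E₀ _ hsupp hpos0 hpos1 hFE₀ x
  have hV0F_nonneg : ∀ y, 0 ≤ V₀ F y := by
    have heq : V₀ F = V₀ (F ⊔ 0) := by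
      apply hsupp
      intro y hy
      have := hFE₀ y hy
      simp [max_eq_left this]
    rw [heq]
    exact hpos0 (F ⊔ 0) (fun y => by simp [le_max_iff])
  have hpow : ∀ n : ℕ, ∀ g : C(E, ℝ), (∀ y, 0 ≤ g y) → ∀ y, 0 ≤ (V₁ ^ n) g y := by
    intro n
    induction n with
    | zero => intro g hg y; simpa using hg y
    | succ n ih =>
        intro g hg y
        rw [pow_succ, ContinuousLinearMap.mul_apply]
        exact ih (V₁ g) (hpos1 g hg) y
  rw [key, htsum_apply]
  have heval : (∑' n : ℕ, (V₁ ^ n) (V₀ F)) x = ∑' n : ℕ, ((V₁ ^ n) (V₀ F)) x :=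
    (ContinuousMap.evalCLM ℝ x).map_tsum (happ (V₀ F))
  rw [heval]
  exact tsum_nonneg fun n => hpow n (V₀ F) hV0F_nonneg x
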